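/- Let μ_I, μ_S, r ∈ ℝ, σ_I, σ_S ∈ ℝ^d with σ_I ≠ σ_S, T > 0, δ, ε ∈ (0,1), and ξ ~ N(0, I_d). Let L = (μ_S − μ_I)T + ((‖σ_I‖² − ‖σ_S‖²)/2)T + √T (σ_S − σ_I)·ξ. If μ_S − μ_I + ‖σ_I‖² − σ_S·σ_I ≥ (z_δ + z_ε)‖σ_S − σ_I‖/√T, then P( L + (‖σ_S − σ_I‖²/2)T < z_δ‖σ_S − σ_I‖√T ) ≤ ε. -/

import Mathlib

open MeasureTheory ProbabilityTheory

open scoped NNReal ENNReal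

open Real in
lemma gaussianPDFReal_mul_aux {a b : ℝ≥0} (ha : a ≠ 0) (hb : b ≠ 0) (x y : ℝ) :
    gaussianPDFReal 0 a x * gaussianPDFReal x b y
      = gaussianPDFReal 0 (a + b) y
        * gaussianPDFReal ((a : ℝ) * y / ((a : ℝ) + b)) (a * b / (a + b)) x := by
  have hA : 0 < (a : ℝ) := NNReal.coe_pos.mpr (pos_iff_ne_zero.mpr ha)
  have hB : 0 < (b : ℝ) := NNReal.coe_pos.mpr (pos_iff_ne_zero.mpr hb)
  have hAB : 0 < (a : ℝ) + b := by linarith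
  have hco : ((a * b / (a + b) : ℝ≥0) : ℝ) = (a : ℝ) * b / ((a : ℝ) + b) := by
    push_cast
    ring
  have key : ∀ c₁ c₂ e₁ e₂ : ℝ, c₁ * rexp e₁ * (c₂ * rexp e₂) = c₁ * c₂ * rexp (e₁ + e₂) := by
    intro c₁ c₂ e₁ e₂; rw [Real.exp_add]; ring
  simp only [gaussianPDFReal, hco, NNReal.coe_add]
  rw [key, key]
  congr 1
  · rw [← mul_inv, ← mul_inv, ← Real.sqrt_mul (by positivity), ← Real.sqrt_mul (by positivity)]
    congr 1
    field_simp
  · congr 1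
    field_simp
    ring

lemma gaussianReal_conv (a b : ℝ≥0) :
    Measure.map (fun p : ℝ × ℝ => p.1 + p.2) ((gaussianReal 0 a).prod (gaussianReal 0 b))
      = gaussianReal 0 (a + b) := by
  by_cases ha : a = 0
  · subst ha
    rw [gaussianReal_zero_var, Measure.dirac_prod,
      Measure.map_map measurable_add measurable_prodMk_left]
    have : ((fun p : ℝ × ℝ => p.1 + p.2) ∘ Prod.mk 0) = fun y : ℝ => 0 + y := rfl
    rw [this, gaussianReal_map_const_add, add_zero, zero_add]
  by_cases hb : b = 0
  · subst hb
    rw [gaussianReal_zero_var, Measure.prod_dirac,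
      Measure.map_map measurable_add (measurable_prodMk_right (β := ℝ))]
    have : ((fun p : ℝ × ℝ => p.1 + p.2) ∘ fun x : ℝ => (x, (0:ℝ))) = fun x : ℝ => x + 0 := rfl
    rw [this, gaussianReal_map_add_const, add_zero, add_zero]
  -- main case
  have hab : a + b ≠ 0 := by simp [ha, hb]
  have hv : a * b / (a + b) ≠ 0 := by
    rw [ne_eq, div_eq_zero_iff]
    simp [ha, hb, hab]
  have hjoint : Measurable fun p : ℝ × ℝ => gaussianPDF p.1 b p.2 := by
    unfold gaussianPDF gaussianPDFReal
    fun_prop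
  ext s hs
  rw [Measure.map_apply measurable_add hs, Measure.prod_apply (measurable_add hs)]
  have h1 : ∀ x : ℝ, (gaussianReal 0 b) (Prod.mk x ⁻¹' ((fun p : ℝ × ℝ => p.1 + p.2) ⁻¹' s))
      = ∫⁻ y in s, gaussianPDF x b y := by
    intro x
    have hset : Prod.mk x ⁻¹' ((fun p : ℝ × ℝ => p.1 + p.2) ⁻¹' s) = (fun y => x + y) ⁻¹' s := rfl
    rw [hset, ← Measure.map_apply (measurable_const_add x) hs, gaussianReal_map_const_add,
      zero_add, gaussianReal_apply _ hb]
  simp_rw [h1]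
  have hmeas : Measurable fun x : ℝ => ∫⁻ y in s, gaussianPDF x b y := by
    exact Measurable.lintegral_prod_right hjoint
  rw [gaussianReal_of_var_ne_zero 0 ha,
    lintegral_withDensity_eq_lintegral_mul _ (measurable_gaussianPDF 0 a) hmeas]
  have h2 : ∀ x : ℝ, gaussianPDF 0 a x * ∫⁻ y in s, gaussianPDF x b y
      = ∫⁻ y in s, gaussianPDF 0 a x * gaussianPDF x b y := fun x =>
    (lintegral_const_mul _ (hjoint.comp measurable_prodMk_left)).symm
  simp only [Pi.mul_apply]
  simp_rw [h2]
  rw [lintegral_lintegral_swap]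
  · have h3 : ∀ y : ℝ, ∫⁻ x, gaussianPDF 0 a x * gaussianPDF x b y = gaussianPDF 0 (a + b) y := by
      intro y
      have hpt : ∀ x : ℝ, gaussianPDF 0 a x * gaussianPDF x b y
          = gaussianPDF 0 (a + b) y * gaussianPDF ((a : ℝ) * y / ((a : ℝ) + b)) (a * b / (a + b)) x := by
        intro x
        unfold gaussianPDF
        rw [← ENNReal.ofReal_mul (gaussianPDFReal_nonneg _ _ _),
          ← ENNReal.ofReal_mul (gaussianPDFReal_nonneg _ _ _),
          gaussianPDFReal_mul_aux ha hb]
      simp_rw [hpt]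
      rw [lintegral_const_mul _ (measurable_gaussianPDF _ _),
        lintegral_gaussianPDF_eq_one _ hv, mul_one]
    simp_rw [h3]
    rw [← gaussianReal_apply 0 hab s]
  · exact (((measurable_gaussianPDF 0 a).comp measurable_fst).mul hjoint).aemeasurable

lemma map_pi_sum : ∀ (n : ℕ) (u : Fin n → ℝ) (v : ℝ≥0), (v : ℝ) = ∑ i, u i ^ 2 →
    Measure.map (fun x : Fin n → ℝ => ∑ i, u i * x i)
      (Measure.pi fun _ => gaussianReal 0 1) = gaussianReal 0 v := by
  intro n
  induction n with
  | zero =>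
    intro u v hv
    have hv0 : v = 0 := by
      have : (v : ℝ) = 0 := by simpa using hv
      exact NNReal.coe_eq_zero.mp this
    have hf : (fun x : Fin 0 → ℝ => ∑ i, u i * x i) = fun _ => (0 : ℝ) := by
      funext x; simp
    rw [hf, Measure.map_const, measure_univ, one_smul, hv0, gaussianReal_zero_var]
  | succ n ih =>
    intro u v hv
    set e := MeasurableEquiv.piFinSuccAbove (fun _ : Fin (n + 1) => ℝ) 0 with he
    have hmp := measurePreserving_piFinSuccAbove (fun _ : Fin (n + 1) => gaussianReal 0 1) 0
    have hpi : Measure.pi (fun _ : Fin (n + 1) => gaussianReal 0 1)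
        = Measure.map e.symm
          ((gaussianReal 0 1).prod (Measure.pi fun _ : Fin n => gaussianReal 0 1)) := by
      rw [hmp.symm e |>.map_eq]
    have hsum : Measurable fun x : Fin (n + 1) → ℝ => ∑ i, u i * x i := by fun_prop
    rw [hpi, Measure.map_map hsum e.symm.measurable]
    have hcomp : ((fun x : Fin (n + 1) → ℝ => ∑ i, u i * x i) ∘ e.symm)
        = fun p : ℝ × (Fin n → ℝ) => u 0 * p.1 + ∑ j : Fin n, u j.succ * p.2 j := by
      funext p
      simp [he, Fin.sum_univ_succ, MeasurableEquiv.piFinSuccAbove_symm_apply,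
        Fin.insertNth_zero, Fin.cons_zero, Fin.cons_succ]
    rw [hcomp]
    have hg : Measurable fun x : ℝ => u 0 * x := by fun_prop
    have hh : Measurable fun y : Fin n → ℝ => ∑ j : Fin n, u j.succ * y j := by fun_prop
    have hsplit : (fun p : ℝ × (Fin n → ℝ) => u 0 * p.1 + ∑ j : Fin n, u j.succ * p.2 j)
        = (fun q : ℝ × ℝ => q.1 + q.2)
          ∘ Prod.map (fun x : ℝ => u 0 * x) (fun y : Fin n → ℝ => ∑ j : Fin n, u j.succ * y j) := rfl
    rw [hsplit, ← Measure.map_map measurable_add (hg.prodMap hh),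
      ← Measure.map_prod_map _ _ hg hh,
      ih (fun j => u j.succ) (NNReal.mk (∑ j : Fin n, u j.succ ^ 2) (by positivity)) rfl]
    have hg' : Measure.map (fun x : ℝ => u 0 * x) (gaussianReal 0 1)
        = gaussianReal 0 (NNReal.mk (u 0 ^ 2) (sq_nonneg _)) := by
      rw [show (fun x : ℝ => u 0 * x) = (u 0 * ·) from rfl, gaussianReal_map_const_mul,
        mul_zero, mul_one]
    rw [hg', gaussianReal_conv]
    congr 1
    rw [← NNReal.coe_inj]
    push_cast
    rw [hv, Fin.sum_univ_succ]

/-- The standard Gaussian measure `N(0, I_d)` on `EuclideanSpace ℝ (Fin d)`. -/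
noncomputable def stdGaussian (d : ℕ) : Measure (EuclideanSpace ℝ (Fin d)) :=
  (Measure.pi fun _ : Fin d => gaussianReal 0 1).map
    (EuclideanSpace.equiv (Fin d) ℝ).symm

/-- The standard normal distribution function `F`. -/
noncomputable def stdNormalCDF (x : ℝ) : ℝ := ((gaussianReal 0 1) (Set.Iic x)).toReal

theorem stmt8 {d : ℕ} (μI μS r T δ ε : ℝ) (hT : 0 < T)
    (hδ : δ ∈ Set.Ioo (0 : ℝ) 1) (hε : ε ∈ Set.Ioo (0 : ℝ) 1)
    (σI σS : EuclideanSpace ℝ (Fin d)) (hne : σI ≠ σS)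
    (zδ zε : ℝ)
    (hz1 : ((gaussianReal 0 1) (Set.Ici zδ)).toReal = δ)
    (hz2 : ((gaussianReal 0 1) (Set.Ici zε)).toReal = ε)
    (h : μS - μI + ‖σI‖ ^ 2 - (inner ℝ σS σI : ℝ)
        ≥ (zδ + zε) * ‖σS - σI‖ / Real.sqrt T) :
    ((stdGaussian d) {ξ |
        ((μS - μI) * T + ((‖σI‖ ^ 2 - ‖σS‖ ^ 2) / 2) * T
            + Real.sqrt T * (inner ℝ (σS - σI) ξ : ℝ))
          + (‖σS - σI‖ ^ 2 / 2) * T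
        < zδ * ‖σS - σI‖ * Real.sqrt T}).toReal ≤ ε := by
  have hvne : σS - σI ≠ 0 := sub_ne_zero.mpr (Ne.symm hne)
  have hc : 0 < ‖σS - σI‖ := norm_pos_iff.mpr hvne
  have hs : 0 < Real.sqrt T := Real.sqrt_pos.mpr hT
  have hsq : Real.sqrt T * Real.sqrt T = T := Real.mul_self_sqrt hT.le
  set c : ℝ := ‖σS - σI‖ with hcdef
  -- the enlarged event
  set S : Set (EuclideanSpace ℝ (Fin d)) :=
    {ξ | (inner ℝ (σS - σI) ξ : ℝ) < -zε * c} with hSdef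
  have hsub : {ξ : EuclideanSpace ℝ (Fin d) |
      ((μS - μI) * T + ((‖σI‖ ^ 2 - ‖σS‖ ^ 2) / 2) * T
          + Real.sqrt T * (inner ℝ (σS - σI) ξ : ℝ))
        + (‖σS - σI‖ ^ 2 / 2) * T
      < zδ * ‖σS - σI‖ * Real.sqrt T} ⊆ S := by
    intro ξ hξ
    simp only [hSdef, Set.mem_setOf_eq] at hξ ⊢
    have hA : (zδ + zε) * c ≤ (μS - μI + ‖σI‖ ^ 2 - (inner ℝ σS σI : ℝ)) * Real.sqrt T := by
      rw [ge_iff_le, div_le_iff₀ hs] at h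
      exact h
    have hid : c ^ 2 = ‖σS‖ ^ 2 - 2 * (inner ℝ σS σI : ℝ) + ‖σI‖ ^ 2 := norm_sub_sq_real σS σI
    rw [hcdef] at hA hid ⊢
    obtain ⟨s, hsdef⟩ : ∃ s, Real.sqrt T = s := ⟨_, rfl⟩
    rw [hsdef] at hξ hA hs hsq
    rw [← hsq] at hξ
    nlinarith [mul_nonneg (sub_nonneg.mpr hA) hs.le, hξ, mul_pos hs hc]
  have hmeas_symm : Measurable ((EuclideanSpace.equiv (Fin d) ℝ).symm :
      (Fin d → ℝ) → EuclideanSpace ℝ (Fin d)) :=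
    (EuclideanSpace.equiv (Fin d) ℝ).symm.continuous.measurable
  have hinner_cont : Continuous fun ξ : EuclideanSpace ℝ (Fin d) => (inner ℝ (σS - σI) ξ : ℝ) :=
    Continuous.inner continuous_const continuous_id
  have hSmeas : MeasurableSet S := by
    exact measurableSet_lt hinner_cont.measurable measurable_const
  have hprob : IsProbabilityMeasure (stdGaussian d) := by
    unfold _root_.stdGaussian
    exact Measure.isProbabilityMeasure_map hmeas_symm.aemeasurable
  -- variance
  have hVar : ((⟨c ^ 2, sq_nonneg c⟩ : ℝ≥0) : ℝ) = ∑ i, (σS - σI) i ^ 2 := by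
    show c ^ 2 = _
    rw [hcdef, EuclideanSpace.norm_eq, Real.sq_sqrt (by positivity)]
    congr 1
    funext i
    rw [Real.norm_eq_abs, sq_abs]
  have hfmeas : Measurable fun x : Fin d → ℝ => ∑ i, (σS - σI) i * x i := by fun_prop
  have hmapS : stdGaussian d S = gaussianReal 0 ⟨c ^ 2, sq_nonneg c⟩ (Set.Iio (-zε * c)) := by
    unfold _root_.stdGaussian
    rw [Measure.map_apply hmeas_symm hSmeas]
    have hset : ((EuclideanSpace.equiv (Fin d) ℝ).symm :
        (Fin d → ℝ) → EuclideanSpace ℝ (Fin d)) ⁻¹' S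
        = (fun x : Fin d → ℝ => ∑ i, (σS - σI) i * x i) ⁻¹' Set.Iio (-zε * c) := by
      ext x
      simp only [hSdef, Set.mem_preimage, Set.mem_setOf_eq, Set.mem_Iio]
      have : (inner ℝ (σS - σI) ((EuclideanSpace.equiv (Fin d) ℝ).symm x) : ℝ)
          = ∑ i, (σS - σI) i * x i := by
        rw [PiLp.inner_apply]
        simp [RCLike.inner_apply, conj_trivial, mul_comm]
      rw [this]
    rw [hset, ← Measure.map_apply hfmeas measurableSet_Iio,
      map_pi_sum d (fun i => (σS - σI) i) ⟨c ^ 2, sq_nonneg c⟩ hVar]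
  -- scaling
  have hscale : gaussianReal 0 (⟨c ^ 2, sq_nonneg c⟩ : ℝ≥0) (Set.Iio (-zε * c))
      = gaussianReal 0 1 (Set.Iio (-zε)) := by
    have hmap : (gaussianReal 0 1).map (c * ·) = gaussianReal 0 ⟨c ^ 2, sq_nonneg c⟩ := by
      rw [gaussianReal_map_const_mul, mul_zero, mul_one]
      rfl
    rw [← hmap, Measure.map_apply (measurable_const_mul c) measurableSet_Iio]
    congr 1
    ext x
    simp only [Set.mem_preimage, Set.mem_Iio]
    rw [mul_comm (-zε) c]
    exact mul_lt_mul_iff_right₀ hc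
  -- symmetry
  have hsym : gaussianReal 0 1 (Set.Iio (-zε)) = gaussianReal 0 1 (Set.Ioi zε) := by
    have hmap : (gaussianReal 0 1).map ((-1 : ℝ) * ·) = gaussianReal 0 1 := by
      rw [gaussianReal_map_const_mul, mul_zero]
      congr 1
      rw [← NNReal.coe_inj]
      push_cast
      norm_num
    conv_lhs => rw [← hmap]
    rw [Measure.map_apply (measurable_const_mul _) measurableSet_Iio]
    congr 1
    ext x
    simp only [Set.mem_preimage, Set.mem_Iio, Set.mem_Ioi, neg_mul, one_mul, neg_lt_neg_iff]
  calc ((stdGaussian d) _).toReal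
      ≤ ((stdGaussian d) S).toReal :=
        ENNReal.toReal_mono (measure_ne_top _ _) (measure_mono hsub)
    _ = (gaussianReal 0 1 (Set.Ioi zε)).toReal := by rw [hmapS, hscale, hsym]
    _ ≤ (gaussianReal 0 1 (Set.Ici zε)).toReal :=
        ENNReal.toReal_mono (measure_ne_top _ _) (measure_mono Set.Ioi_subset_Ici_self)
    _ = ε := hz2
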